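/- arXiv:2012.07240 — 3 statements merged into one kernel-verified Lean document; each statement's English description precedes it below -/
import Mathlib

section
/- Let 0 < α < 1, let {a_j}_{j∈ℤ} be a sequence of positive reals with ρ ≤ a_{j+1}/a_j ≤ ρ² for some ρ > 1, let {v_j} be a real sequence with |v_j| ≤ V for all j, and let s > 0. Then for any integers m ≤ M, |∑_{j=m}^{M} v_j (a_{j+1}^{2α} e^{-a_{j+1}²/(4s)} - a_j^{2α} e^{-a_j²/(4s)}) / s^{1+α}| ≤ C / a_m², where C depends only on ρ, V, α (not on m, M, s). -/
open Real Finset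

lemma aux_sq_exp (t : ℝ) (ht : 0 ≤ t) : t^2 * Real.exp (-t) ≤ 27 := by
  rcases le_total t 1 with h | h
  · have h1 : t^2 ≤ 1 := by nlinarith
    have h2 : Real.exp (-t) ≤ 1 := Real.exp_le_one_iff.mpr (by linarith)
    nlinarith [Real.exp_pos (-t)]
  · have h3 : t/3 ≤ Real.exp (t/3) := by
      have := Real.add_one_le_exp (t/3); linarith
    have h4 : (t/3)^3 ≤ Real.exp (t/3)^3 := by
      apply pow_le_pow_left₀ (by linarith) h3
    have h5 : Real.exp (t/3)^3 = Real.exp t := by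
      rw [← Real.exp_nat_mul]; norm_num; ring_nf
    have h6 : t^3 ≤ 27 * Real.exp t := by
      rw [h5] at h4; nlinarith
    have h7 : t^2 ≤ t^3 := by nlinarith
    have := Real.exp_pos t
    rw [Real.exp_neg]
    rw [mul_inv_le_iff₀' this]
    nlinarith

lemma aux_rpow_exp (α t : ℝ) (hα : 0 < α) (hα1 : α < 1) (ht : 0 < t) :
    t ^ (1 + α) * Real.exp (-t) ≤ 28 := by
  have hle : t ^ (1 + α) ≤ 1 + t^2 := by
    rcases le_total t 1 with h | h
    · have : t ^ (1+α) ≤ 1 := Real.rpow_le_one ht.le h (by linarith)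
      nlinarith
    · have h1 : t ^ (1+α) ≤ t ^ (2:ℝ) :=
        Real.rpow_le_rpow_of_exponent_le h (by linarith)
      have h2 : t ^ (2:ℝ) = t^2 := by
        rw [show (2:ℝ) = ((2:ℕ):ℝ) by norm_num, Real.rpow_natCast]
      rw [h2] at h1; nlinarith
  have he : 0 < Real.exp (-t) := Real.exp_pos _
  have h2 := aux_sq_exp t ht.le
  have h3 : Real.exp (-t) ≤ 1 := Real.exp_le_one_iff.mpr (by linarith)
  nlinarith [Real.rpow_pos_of_pos ht (1+α)]

lemma key_bound (α : ℝ) (hα : 0 < α) (hα1 : α < 1) (u s : ℝ) (hu : 0 < u) (hs : 0 < s) :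
    u ^ (2*α) * Real.exp (-u^2/(4*s)) / s ^ (1+α) ≤ 448 / u^2 := by
  set t := u^2/(4*s) with htdef
  have ht : 0 < t := by positivity
  have hu2 : u^2 = 4*s*t := by rw [htdef]; field_simp
  have h1 : u ^ (2*α) = ((4*s)*t) ^ α := by
    rw [Real.rpow_mul hu.le]
    congr 1
    rw [show ((2:ℝ)) = ((2:ℕ):ℝ) by norm_num, Real.rpow_natCast]
    exact hu2
  have h2 : ((4*s)*t)^α = (4:ℝ)^α * s^α * t^α := by
    rw [Real.mul_rpow (by positivity) ht.le, Real.mul_rpow (by norm_num) hs.le]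
  have h4 : (4:ℝ)^α ≤ 4 := by
    calc (4:ℝ)^α ≤ (4:ℝ)^(1:ℝ) := Real.rpow_le_rpow_of_exponent_le (by norm_num) hα1.le
    _ = 4 := Real.rpow_one 4
  have h5 : s^(1+α) = s * s^α := by rw [Real.rpow_add hs, Real.rpow_one]
  have h6 : -u^2/(4*s) = -t := by rw [htdef, neg_div]
  have hte : t^α * Real.exp (-t) * t ≤ 28 := by
    have := aux_rpow_exp α t hα hα1 ht
    rw [Real.rpow_add ht, Real.rpow_one] at this
    nlinarith [this]
  rw [h1, h2, h5, h6, hu2]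
  rw [div_le_div_iff₀ (by positivity) (by positivity)]
  have hA : (4:ℝ)^α * (t^α * Real.exp (-t) * t) ≤ 4 * 28 := by
    apply mul_le_mul h4 hte (by positivity) (by norm_num)
  nlinarith [mul_le_mul_of_nonneg_right hA (show (0:ℝ) ≤ 4*s*s^α by positivity),
    Real.rpow_pos_of_pos hs α, Real.rpow_pos_of_pos ht α, Real.exp_pos (-t)]

set_option maxHeartbeats 1000000 in
/-- Lemma (i) of the Cotlar-type estimate: for a `ρ`-lacunary sequence with
`ρ ≤ a_{j+1}/a_j ≤ ρ²` and `|v_j| ≤ V`,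
`|∑_{j=m}^{M} v_j (a_{j+1}^{2α} e^{-a_{j+1}²/(4s)} - a_j^{2α} e^{-a_j²/(4s)})/s^{1+α}| ≤ C/a_m²`,
with `C = C(ρ, V, α)`. -/
theorem cotlar_lemma_i (α ρ V : ℝ) (hα : 0 < α) (hα1 : α < 1) (hρ : 1 < ρ) (hV : 0 < V) :
    ∃ C > 0, ∀ (a : ℤ → ℝ) (v : ℤ → ℝ),
      (∀ j, 0 < a j) →
      (∀ j, ρ ≤ a (j + 1) / a j) → (∀ j, a (j + 1) / a j ≤ ρ ^ 2) →
      (∀ j, |v j| ≤ V) →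
      ∀ (m M : ℤ), m ≤ M → ∀ s : ℝ, 0 < s →
        |∑ j ∈ Finset.Icc m M,
            v j * ((a (j + 1) ^ (2 * α) * Real.exp (-(a (j + 1)) ^ 2 / (4 * s))
              - a j ^ (2 * α) * Real.exp (-(a j) ^ 2 / (4 * s))) / s ^ (1 + α))|
          ≤ C / (a m) ^ 2 := by
  have hρ0 : (0:ℝ) < ρ := by linarith
  set r : ℝ := (ρ^2)⁻¹ with hrdef
  have hr0 : 0 < r := by positivity
  have hr1 : r < 1 := by
    rw [hrdef, inv_lt_one_iff₀]; right; nlinarith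
  have hrρ : r * ρ^2 = 1 := inv_mul_cancel₀ (by positivity)
  refine ⟨896 * V / (1 - r), div_pos (by linarith) (by linarith), ?_⟩
  intro a v hpos hlow _hhigh hv m M hmM s hs
  -- step up: ρ * a j ≤ a (j+1)
  have hstep : ∀ j : ℤ, ρ * a j ≤ a (j + 1) := fun j =>
    (le_div_iff₀ (hpos j)).mp (hlow j)
  have hmono : ∀ j : ℤ, a j ≤ a (j + 1) := fun j => by
    have := hstep j; nlinarith [hpos j]
  have hgeom : ∀ n : ℕ, ρ^n * a m ≤ a (m + n) := by
    intro n
    induction n with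
    | zero => simp
    | succ n ih =>
        have h := hstep (m + n)
        have : ρ * (ρ^n * a m) ≤ ρ * a (m + n) :=
          mul_le_mul_of_nonneg_left ih hρ0.le
        calc ρ^(n+1) * a m = ρ * (ρ^n * a m) := by ring
          _ ≤ ρ * a (m + n) := this
          _ ≤ a (m + n + 1) := h
          _ = a (m + (n+1 : ℕ)) := by push_cast; ring_nf
  have hspow : (0:ℝ) < s ^ (1+α) := Real.rpow_pos_of_pos hs _
  have ham : 0 < a m := hpos m
  -- per-term bound
  have hterm : ∀ j ∈ Finset.Icc m M,
      |v j * ((a (j + 1) ^ (2 * α) * Real.exp (-(a (j + 1)) ^ 2 / (4 * s))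
              - a j ^ (2 * α) * Real.exp (-(a j) ^ 2 / (4 * s))) / s ^ (1 + α))|
        ≤ (896 * V / (a m)^2) * r ^ ((j - m).toNat) := by
    intro j hj
    rw [Finset.mem_Icc] at hj
    set n : ℕ := (j - m).toNat with hndef
    have hjn : j = m + (n:ℤ) := by omega
    have hgj : ρ^n * a m ≤ a j := by rw [hjn]; exact hgeom n
    set A := a (j + 1) ^ (2 * α) * Real.exp (-(a (j + 1)) ^ 2 / (4 * s)) with hAdef
    set B := a j ^ (2 * α) * Real.exp (-(a j) ^ 2 / (4 * s)) with hBdef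
    have hA0 : 0 ≤ A := by
      have := hpos (j+1); rw [hAdef]; positivity
    have hB0 : 0 ≤ B := by
      have := hpos j; rw [hBdef]; positivity
    have hAb : A / s^(1+α) ≤ 448 / (a (j+1))^2 :=
      key_bound α hα hα1 (a (j+1)) s (hpos _) hs
    have hBb : B / s^(1+α) ≤ 448 / (a j)^2 :=
      key_bound α hα hα1 (a j) s (hpos _) hs
    have hAb' : A / s^(1+α) ≤ 448 / (a j)^2 := by
      refine hAb.trans ?_
      have h1 : (a j)^2 ≤ (a (j+1))^2 := by nlinarith [hmono j, hpos j]
      rw [div_le_div_iff₀ (pow_pos (hpos (j+1)) 2) (pow_pos (hpos j) 2)]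
      nlinarith [pow_pos (hpos j) 2]
    have habs : |v j * ((A - B) / s^(1+α))| ≤ V * ((A + B) / s^(1+α)) := by
      rw [abs_mul]
      apply mul_le_mul (hv j) ?_ (abs_nonneg _) hV.le
      rw [abs_div, abs_of_pos hspow]
      have h : |A - B| ≤ A + B := abs_sub_le_iff.mpr ⟨by linarith, by linarith⟩
      gcongr
    have hsum2 : V * ((A + B) / s^(1+α)) ≤ V * (896 / (a j)^2) := by
      apply mul_le_mul_of_nonneg_left ?_ hV.le
      rw [add_div]
      calc A / s^(1+α) + B / s^(1+α) ≤ 448 / (a j)^2 + 448 / (a j)^2 :=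
            add_le_add hAb' hBb
        _ = 896 / (a j)^2 := by ring
    have hlac : V * (896 / (a j)^2) ≤ (896 * V / (a m)^2) * r^n := by
      have hrn : r^n * (ρ^n)^2 = 1 := by
        rw [← pow_mul, mul_comm n 2, pow_mul, ← mul_pow, hrρ, one_pow]
      have hj2 : (ρ^n * a m)^2 ≤ (a j)^2 := by
        apply pow_le_pow_left₀ (by positivity) hgj
      have hrn0 : (0:ℝ) < r^n := by positivity
      have hkey : (a m)^2 ≤ r^n * (a j)^2 := by
        calc (a m)^2 = r^n * (ρ^n * a m)^2 := by rw [mul_pow, ← mul_assoc, hrn, one_mul]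
          _ ≤ r^n * (a j)^2 := mul_le_mul_of_nonneg_left hj2 hrn0.le
      have e1 : V * (896 / (a j)^2) = (896*V) / (a j)^2 := by ring
      have e2 : (896 * V / (a m)^2) * r^n = (896*V*r^n) / (a m)^2 := by ring
      rw [e1, e2, div_le_div_iff₀ (pow_pos (hpos j) 2) (pow_pos ham 2)]
      calc 896*V*(a m)^2 ≤ 896*V*(r^n*(a j)^2) :=
            mul_le_mul_of_nonneg_left hkey (by positivity)
        _ = 896*V*r^n*(a j)^2 := by ring
    calc |v j * ((A - B) / s^(1+α))| ≤ V * ((A + B) / s^(1+α)) := habs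
      _ ≤ V * (896 / (a j)^2) := hsum2
      _ ≤ (896 * V / (a m)^2) * r^n := hlac
  -- sum the per-term bounds
  set N : ℕ := (M - m).toNat + 1 with hNdef
  have hmap : Finset.Icc m M = (Finset.range N).map
      ⟨fun i : ℕ => m + (i:ℤ), fun i j h => by simpa using h⟩ := by
    ext j
    simp only [Finset.mem_Icc, Finset.mem_map, Finset.mem_range, Function.Embedding.coeFn_mk]
    constructor
    · intro ⟨h1, h2⟩
      exact ⟨(j - m).toNat, by omega, by show m + (((j - m).toNat : ℕ) : ℤ) = j; omega⟩
    · rintro ⟨i, hi, rfl⟩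
      show m ≤ m + (i:ℤ) ∧ m + (i:ℤ) ≤ M
      omega
  have hsum : ∑ j ∈ Finset.Icc m M, (896 * V / (a m)^2) * r ^ ((j - m).toNat)
      = (896 * V / (a m)^2) * ∑ i ∈ Finset.range N, r ^ i := by
    rw [hmap, Finset.sum_map, Finset.mul_sum]
    apply Finset.sum_congr rfl
    intro i _
    congr 2
    show (m + (i:ℤ) - m).toNat = i
    simp
  have hgeomsum : ∑ i ∈ Finset.range N, r ^ i ≤ 1 / (1 - r) := by
    rw [geom_sum_eq (by intro h; rw [h] at hr1; linarith : r ≠ 1)]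
    have e : (r^N - 1)/(r - 1) = (1 - r^N)/(1 - r) := by
      rw [← neg_div_neg_eq]; ring_nf
    rw [e, div_le_div_iff₀ (by linarith) (by linarith)]
    have : 0 < r^N := by positivity
    nlinarith
  calc |∑ j ∈ Finset.Icc m M,
            v j * ((a (j + 1) ^ (2 * α) * Real.exp (-(a (j + 1)) ^ 2 / (4 * s))
              - a j ^ (2 * α) * Real.exp (-(a j) ^ 2 / (4 * s))) / s ^ (1 + α))|
      ≤ ∑ j ∈ Finset.Icc m M, |v j * ((a (j + 1) ^ (2 * α) * Real.exp (-(a (j + 1)) ^ 2 / (4 * s))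
              - a j ^ (2 * α) * Real.exp (-(a j) ^ 2 / (4 * s))) / s ^ (1 + α))| :=
        Finset.abs_sum_le_sum_abs _ _
    _ ≤ ∑ j ∈ Finset.Icc m M, (896 * V / (a m)^2) * r ^ ((j - m).toNat) :=
        Finset.sum_le_sum hterm
    _ = (896 * V / (a m)^2) * ∑ i ∈ Finset.range N, r ^ i := hsum
    _ ≤ (896 * V / (a m)^2) * (1 / (1 - r)) := by
        apply mul_le_mul_of_nonneg_left hgeomsum (by positivity)
    _ = (896 * V / (1 - r)) / (a m)^2 := by
        field_simp
end

section
/- Let 0 < α < 1, ρ > 1, and let {a_j}_{j∈ℤ} be positive reals with ρ ≤ a_{j+1}/a_j ≤ ρ², and {v_j} with |v_j| ≤ V. Let c > 0, let k ≥ m be integers and t, s ∈ ℝ with t - s ≥ c a_k². Then for any M with -M ≤ m-1, |∑_{j=-M}^{m-1} v_j (a_{j+1}^{2α} e^{-a_{j+1}²/(4(t-s))} - a_j^{2α} e^{-a_j²/(4(t-s))}) / (t-s)^{1+α}| ≤ C a_k^{-2} ρ^{-2α(k-m+1)}, with C depending only on ρ, V, α, c. -/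
open Real Finset

lemma pow_rpow_comm' (x : ℝ) (hx : 0 ≤ x) (y : ℝ) (n : ℕ) : (x ^ n) ^ y = (x ^ y) ^ n := by
  rw [← Real.rpow_natCast x n, ← Real.rpow_mul hx, mul_comm, Real.rpow_mul hx,
    Real.rpow_natCast]

/-- Lemma (ii) of the Cotlar-type estimate: with `t - s ≥ c a_k²` and `k ≥ m`,
`|∑_{j=-M}^{m-1} v_j (a_{j+1}^{2α} e^{-a_{j+1}²/(4(t-s))} - a_j^{2α} e^{-a_j²/(4(t-s))})/(t-s)^{1+α}|
  ≤ C a_k^{-2} ρ^{-2α(k-m+1)}` with `C = C(ρ, V, α, c)`. -/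
theorem cotlar_lemma_ii (α ρ V c : ℝ) (hα : 0 < α) (hα1 : α < 1) (hρ : 1 < ρ)
    (hV : 0 < V) (hc : 0 < c) :
    ∃ C > 0, ∀ (a : ℤ → ℝ) (v : ℤ → ℝ),
      (∀ j, 0 < a j) →
      (∀ j, ρ ≤ a (j + 1) / a j) → (∀ j, a (j + 1) / a j ≤ ρ ^ 2) →
      (∀ j, |v j| ≤ V) →
      ∀ (m k M : ℤ), m ≤ k → -M ≤ m - 1 →
      ∀ t s : ℝ, c * (a k) ^ 2 ≤ t - s →
        |∑ j ∈ Finset.Icc (-M) (m - 1),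
            v j * ((a (j + 1) ^ (2 * α) * Real.exp (-(a (j + 1)) ^ 2 / (4 * (t - s)))
              - a j ^ (2 * α) * Real.exp (-(a j) ^ 2 / (4 * (t - s)))) / (t - s) ^ (1 + α))|
          ≤ C * (a k) ^ (-2 : ℝ) * ρ ^ (-2 * α * (k - m + 1 : ℝ)) := by
  have hρ0 : (0:ℝ) < ρ := by linarith
  have h2α : (0:ℝ) < 2 * α := by linarith
  set R : ℝ := ρ ^ (2 * α) with hRdef
  have hR1 : 1 < R := by
    rw [hRdef, Real.one_lt_rpow_iff_of_pos hρ0]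
    exact Or.inl ⟨hρ, h2α⟩
  have hR0 : 0 < R := by linarith
  set r : ℝ := R⁻¹ with hrdef
  have hr0 : 0 < r := inv_pos.mpr hR0
  have hr1 : r < 1 := by rw [hrdef, inv_lt_one_iff₀]; right; exact hR1
  have h1r : 0 < 1 - r := by linarith
  have hcp : (0:ℝ) < c ^ (1 + α) := Real.rpow_pos_of_pos hc _
  refine ⟨V * (1 - r)⁻¹ * (c ^ (1 + α))⁻¹ * r⁻¹, by positivity, ?_⟩
  intro a v ha hlo hhi hv m k M hmk hM t s hts
  have hak : 0 < a k := ha k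
  have hτ : 0 < t - s := lt_of_lt_of_le (by positivity) hts
  have hτp : 0 < (t - s) ^ (1 + α) := Real.rpow_pos_of_pos hτ _
  have hstep : ∀ j : ℤ, ρ * a j ≤ a (j + 1) := fun j => by
    have := (le_div_iff₀ (ha j)).mp (hlo j); linarith
  have hpow : ∀ (i : ℤ) (n : ℕ), ρ ^ n * a i ≤ a (i + n) := by
    intro i n
    induction n with
    | zero => simp
    | succ n ih =>
      have h1 : ρ * (ρ ^ n * a i) ≤ ρ * a (i + n) :=
        mul_le_mul_of_nonneg_left ih hρ0.le
      have h2 := hstep (i + n)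
      have h3 : a (i + n + 1) = a (i + (n + 1 : ℕ)) := by
        congr 1; push_cast; ring
      calc ρ ^ (n + 1) * a i = ρ * (ρ ^ n * a i) := by ring
        _ ≤ ρ * a (i + n) := h1
        _ ≤ a (i + n + 1) := h2
        _ = a (i + (n + 1 : ℕ)) := h3
  -- quantitative decay
  have hq : ∀ i j : ℤ, i ≤ j → a i ^ (2 * α) ≤ a j ^ (2 * α) * r ^ (j - i).toNat := by
    intro i j hij
    set n : ℕ := (j - i).toNat with hn
    have hcast : (n : ℤ) = j - i := Int.toNat_of_nonneg (by omega)
    have h1 : ρ ^ n * a i ≤ a j := by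
      have := hpow i n
      rwa [show i + (n : ℤ) = j by omega] at this
    have hρn : (0:ℝ) < ρ ^ n := pow_pos hρ0 n
    have h2 : a i ≤ a j * (ρ ^ n)⁻¹ := by
      rw [← div_eq_mul_inv, le_div_iff₀ hρn]; linarith
    have h3 : a i ^ (2 * α) ≤ (a j * (ρ ^ n)⁻¹) ^ (2 * α) :=
      Real.rpow_le_rpow (ha i).le h2 h2α.le
    have h4 : (a j * (ρ ^ n)⁻¹) ^ (2 * α) = a j ^ (2 * α) * r ^ n := by
      rw [Real.mul_rpow (ha j).le (by positivity), ← inv_pow,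
        pow_rpow_comm' ρ⁻¹ (by positivity), Real.inv_rpow hρ0.le, ← hRdef]
    rw [h4] at h3; exact h3
  -- pointwise bound on the gaussian difference
  have hterm : ∀ j : ℤ,
      |a (j + 1) ^ (2 * α) * Real.exp (-(a (j + 1)) ^ 2 / (4 * (t - s)))
        - a j ^ (2 * α) * Real.exp (-(a j) ^ 2 / (4 * (t - s)))| ≤ a (j + 1) ^ (2 * α) := by
    intro j
    have hexp : ∀ x : ℝ, Real.exp (-x ^ 2 / (4 * (t - s))) ≤ 1 := by
      intro x
      apply Real.exp_le_one_iff.mpr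
      apply div_nonpos_of_nonpos_of_nonneg (neg_nonpos.mpr (sq_nonneg x)) (by positivity)
    have hmono : a j ≤ a (j + 1) := le_trans (by nlinarith [ha j, hstep j]) (hstep j)
    have hBle : a j ^ (2 * α) ≤ a (j + 1) ^ (2 * α) :=
      Real.rpow_le_rpow (ha j).le hmono h2α.le
    have p1 : (0:ℝ) ≤ a (j + 1) ^ (2 * α) * Real.exp (-(a (j + 1)) ^ 2 / (4 * (t - s))) :=
      mul_nonneg (Real.rpow_nonneg (ha _).le _) (Real.exp_nonneg _)
    have p2 : (0:ℝ) ≤ a j ^ (2 * α) * Real.exp (-(a j) ^ 2 / (4 * (t - s))) :=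
      mul_nonneg (Real.rpow_nonneg (ha _).le _) (Real.exp_nonneg _)
    have q1 : a (j + 1) ^ (2 * α) * Real.exp (-(a (j + 1)) ^ 2 / (4 * (t - s)))
        ≤ a (j + 1) ^ (2 * α) :=
      mul_le_of_le_one_right (Real.rpow_nonneg (ha _).le _) (hexp _)
    have q2 : a j ^ (2 * α) * Real.exp (-(a j) ^ 2 / (4 * (t - s))) ≤ a (j + 1) ^ (2 * α) :=
      le_trans (mul_le_of_le_one_right (Real.rpow_nonneg (ha _).le _) (hexp _)) hBle
    rw [abs_sub_le_iff]
    constructor <;> linarith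
  -- per-term bound
  have hterm2 : ∀ j ∈ Finset.Icc (-M) (m - 1),
      |v j * ((a (j + 1) ^ (2 * α) * Real.exp (-(a (j + 1)) ^ 2 / (4 * (t - s)))
        - a j ^ (2 * α) * Real.exp (-(a j) ^ 2 / (4 * (t - s)))) / (t - s) ^ (1 + α))|
      ≤ V * (a m ^ (2 * α) * r ^ (m - 1 - j).toNat) / (t - s) ^ (1 + α) := by
    intro j hj
    rw [Finset.mem_Icc] at hj
    have hjm : j + 1 ≤ m := by omega
    have h1 := hq (j + 1) m hjm
    have h1' : a (j + 1) ^ (2 * α) ≤ a m ^ (2 * α) * r ^ (m - 1 - j).toNat := by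
      rwa [show m - (j + 1) = m - 1 - j by ring] at h1
    rw [abs_mul, abs_div, abs_of_pos hτp, ← mul_div_assoc,
      div_le_div_iff_of_pos_right hτp]
    exact mul_le_mul (hv j) (le_trans (hterm j) h1') (abs_nonneg _) hV.le
  -- geometric sum bound
  set N : ℕ := (m - 1 + M).toNat + 1 with hNdef
  have hsum_eq : ∑ j ∈ Finset.Icc (-M) (m - 1), r ^ (m - 1 - j).toNat
      ≤ (1 - r)⁻¹ := by
    have hre : ∑ j ∈ Finset.Icc (-M) (m - 1), r ^ (m - 1 - j).toNat
        = ∑ i ∈ Finset.range N, r ^ i := by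
      apply Finset.sum_nbij' (i := fun j => (m - 1 - j).toNat) (j := fun i => m - 1 - (i : ℤ))
      · intro x hx; rw [Finset.mem_Icc] at hx; rw [Finset.mem_range]; omega
      · intro x hx; rw [Finset.mem_range] at hx; rw [Finset.mem_Icc]; omega
      · intro x hx; rw [Finset.mem_Icc] at hx; omega
      · intro x hx; rw [Finset.mem_range] at hx; omega
      · intro x hx; rfl
    rw [hre]
    have h := Summable.sum_le_tsum (Finset.range N) (fun i _ => pow_nonneg hr0.le i)
      (summable_geometric_of_lt_one hr0.le hr1)
    rwa [tsum_geometric_of_lt_one hr0.le hr1] at h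
  -- combine sum bounds
  have hmain : |∑ j ∈ Finset.Icc (-M) (m - 1),
      v j * ((a (j + 1) ^ (2 * α) * Real.exp (-(a (j + 1)) ^ 2 / (4 * (t - s)))
        - a j ^ (2 * α) * Real.exp (-(a j) ^ 2 / (4 * (t - s)))) / (t - s) ^ (1 + α))|
      ≤ V * a m ^ (2 * α) * (1 - r)⁻¹ / (t - s) ^ (1 + α) := by
    calc _ ≤ ∑ j ∈ Finset.Icc (-M) (m - 1),
          |v j * ((a (j + 1) ^ (2 * α) * Real.exp (-(a (j + 1)) ^ 2 / (4 * (t - s)))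
            - a j ^ (2 * α) * Real.exp (-(a j) ^ 2 / (4 * (t - s)))) / (t - s) ^ (1 + α))| :=
        Finset.abs_sum_le_sum_abs _ _
      _ ≤ ∑ j ∈ Finset.Icc (-M) (m - 1),
          V * (a m ^ (2 * α) * r ^ (m - 1 - j).toNat) / (t - s) ^ (1 + α) :=
        Finset.sum_le_sum hterm2
      _ = V * a m ^ (2 * α) * (∑ j ∈ Finset.Icc (-M) (m - 1), r ^ (m - 1 - j).toNat)
          / (t - s) ^ (1 + α) := by
        rw [← Finset.sum_div, ← Finset.mul_sum, ← Finset.mul_sum, mul_assoc]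
      _ ≤ V * a m ^ (2 * α) * (1 - r)⁻¹ / (t - s) ^ (1 + α) := by
        rw [div_le_div_iff_of_pos_right hτp]
        exact mul_le_mul_of_nonneg_left hsum_eq
          (mul_nonneg hV.le (Real.rpow_nonneg (ha m).le _))
  refine hmain.trans ?_
  set n : ℕ := (k - m).toNat with hn
  have hcast : (n : ℤ) = k - m := Int.toNat_of_nonneg (by omega)
  have hqm : a m ^ (2 * α) ≤ a k ^ (2 * α) * r ^ n := hq m k hmk
  have hakα : (0:ℝ) < a k ^ (2 * α) := Real.rpow_pos_of_pos hak _
  have hBk : c ^ (1 + α) * (a k ^ 2 * a k ^ (2 * α)) ≤ (t - s) ^ (1 + α) := by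
    have h1 : (c * a k ^ 2) ^ (1 + α) ≤ (t - s) ^ (1 + α) :=
      Real.rpow_le_rpow (by positivity) hts (by linarith)
    have h2 : (c * a k ^ 2) ^ (1 + α) = c ^ (1 + α) * (a k ^ 2 * a k ^ (2 * α)) := by
      rw [Real.mul_rpow hc.le (by positivity)]
      congr 1
      rw [← Real.rpow_natCast (a k) 2, ← Real.rpow_mul hak.le,
        show ((2:ℕ):ℝ) * (1 + α) = ((2:ℕ):ℝ) + 2 * α by push_cast; ring,
        Real.rpow_add hak, Real.rpow_natCast]
    linarith
  have hRHSeq : (a k) ^ (-2 : ℝ) = (a k ^ 2)⁻¹ := by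
    rw [show ((-2:ℝ)) = -((2:ℕ):ℝ) by norm_num, Real.rpow_neg hak.le, Real.rpow_natCast]
  have hrho : ρ ^ (-2 * α * ((k:ℝ) - (m:ℝ) + 1)) = r ^ (n + 1) := by
    have hc1 : ((n:ℝ)) = (k:ℝ) - (m:ℝ) := by exact_mod_cast hcast
    have hc2 : (-2 * α * ((k:ℝ) - (m:ℝ) + 1)) = (2 * α) * (-((n + 1 : ℕ):ℝ)) := by
      push_cast; rw [← hc1]; push_cast; ring
    rw [hc2, Real.rpow_mul hρ0.le, ← hRdef, Real.rpow_neg hR0.le, Real.rpow_natCast,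
      ← inv_pow]
  push_cast
  rw [hRHSeq, hrho]
  have hD : (0:ℝ) < c ^ (1 + α) * (a k ^ 2 * a k ^ (2 * α)) := by positivity
  have hne1 : a k ^ (2 * α) ≠ 0 := hakα.ne'
  have hne2 : c ^ (1 + α) ≠ 0 := hcp.ne'
  have hne3 : r ≠ 0 := hr0.ne'
  have hne4 : a k ≠ 0 := hak.ne'
  have hne5 : (1 - r) ≠ 0 := h1r.ne'
  calc V * a m ^ (2 * α) * (1 - r)⁻¹ / (t - s) ^ (1 + α)
      ≤ V * (a k ^ (2 * α) * r ^ n) * (1 - r)⁻¹ / (c ^ (1 + α) * (a k ^ 2 * a k ^ (2 * α))) := by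
        apply div_le_div₀ (by positivity) ?_ hD hBk
        exact mul_le_mul_of_nonneg_right
          (mul_le_mul_of_nonneg_left hqm hV.le) (by positivity)
    _ = V * (1 - r)⁻¹ * (c ^ (1 + α))⁻¹ * r⁻¹ * (a k ^ 2)⁻¹ * r ^ (n + 1) := by
        field_simp
        ring
end

section
/- Let 0 < α < 1 and n ≥ 1. For s > 0 and y ∈ ℝⁿ define W_α(y,s) = e^{-|y|²/(4s)} / ((4π s)^{n/2} s^{1+α}) · s^α. Then ∑_{j∈ℤ} |a_{j+1}^{2α} e^{-a_{j+1}²/(4s)} - a_j^{2α} e^{-a_j²/(4s)}| · e^{-|y|²/(4s)} / ((4πs)^{n/2} s^{1+α}) ≤ C e^{-|y|²/(4s)} / s^{n/2+1} ≤ C' / (s^{1/2}+|y|)^{n+2}, for any increasing positive sequence {a_j}_{j∈ℤ} with a_j → 0 as j→-∞ and a_j → ∞ as j→∞. -/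
open Real MeasureTheory Filter

section KernelAux

lemma telescope_Ico (G : ℤ → ℝ) (lo hi : ℤ) (h : lo ≤ hi) :
    ∑ j ∈ Finset.Ico lo hi, (G (j + 1) - G j) = G hi - G lo := by
  refine Int.le_induction (motive := fun hi _ => ∑ j ∈ Finset.Ico lo hi, (G (j + 1) - G j) = G hi - G lo) ?_ ?_ hi h
  · simp
  · intro k hk ih
    have hins : Finset.Ico lo (k + 1) = insert k (Finset.Ico lo k) := by
      ext x; simp only [Finset.mem_Ico, Finset.mem_insert]; omega
    rw [hins, Finset.sum_insert (by simp), ih]; ring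

lemma mono_inc_sum_le (G : ℤ → ℝ) (hG : Monotone G) (M : ℝ) (h0 : ∀ j, 0 ≤ G j)
    (hM : ∀ j, G j ≤ M) (T : Finset ℤ) : ∑ j ∈ T, (G (j + 1) - G j) ≤ M := by
  rcases T.eq_empty_or_nonempty with rfl | hT
  · simpa using (h0 0).trans (hM 0)
  · set lo := T.min' hT
    set hi := T.max' hT + 1
    have hsub : T ⊆ Finset.Ico lo hi := by
      intro j hj
      simp only [Finset.mem_Ico]
      exact ⟨T.min'_le j hj, by have := T.le_max' j hj; omega⟩
    calc ∑ j ∈ T, (G (j + 1) - G j)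
        ≤ ∑ j ∈ Finset.Ico lo hi, (G (j + 1) - G j) := by
          apply Finset.sum_le_sum_of_subset_of_nonneg hsub
          intro j _ _
          simpa using hG (by omega : j ≤ j + 1)
      _ = G hi - G lo := telescope_Ico G lo hi (by
          have := T.min'_le _ (T.max'_mem hT); omega)
      _ ≤ M := by have := h0 lo; have := hM hi; linarith

lemma mono_inc_summable (G : ℤ → ℝ) (hG : Monotone G) (M : ℝ) (h0 : ∀ j, 0 ≤ G j)
    (hM : ∀ j, G j ≤ M) : Summable (fun j => G (j + 1) - G j) ∧
      ∑' j : ℤ, (G (j + 1) - G j) ≤ M := by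
  have hnn : (0 : ℤ → ℝ) ≤ fun j => G (j + 1) - G j := by
    intro j; simpa using hG (by omega : j ≤ j + 1)
  have hs := summable_of_sum_le hnn (mono_inc_sum_le G hG M h0 hM)
  exact ⟨hs, Summable.tsum_le_of_sum_le hs (mono_inc_sum_le G hG M h0 hM)⟩

section calc1
variable {α s : ℝ}

lemma f_hasDeriv (hα : 0 < α) (hs : 0 < s) {u : ℝ} (hu : 0 < u) :
    HasDerivAt (fun u : ℝ => u ^ (2 * α) * Real.exp (-u ^ 2 / (4 * s)))
      (u ^ (2 * α - 1) * Real.exp (-u ^ 2 / (4 * s)) * (2 * α - u ^ 2 / (2 * s))) u := by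
  have h1 : HasDerivAt (fun u : ℝ => u ^ (2 * α)) (2 * α * u ^ (2 * α - 1)) u :=
    Real.hasDerivAt_rpow_const (Or.inl hu.ne')
  have h2 : HasDerivAt (fun u : ℝ => -u ^ 2 / (4 * s)) (-(2 * u) / (4 * s)) u := by
    have : HasDerivAt (fun u : ℝ => -u ^ 2) (-(2 * u)) u := by
      simpa using ((hasDerivAt_pow 2 u).fun_neg)
    simpa [div_eq_mul_inv] using this.mul_const (4 * s)⁻¹
  have h3 := h2.exp
  have h := h1.fun_mul h3
  refine h.congr_deriv ?_
  have hu2 : u ^ (2 * α) = u ^ (2 * α - 1) * u := by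
    rw [← Real.rpow_add_one hu.ne' (2 * α - 1)]; ring_nf
  rw [hu2]
  field_simp
  ring
end calc1

section calc2
variable {α s : ℝ}

lemma f_contOn (hs : 0 < s) {D : Set ℝ} (hD : D ⊆ Set.Ioi 0) :
    ContinuousOn (fun u : ℝ => u ^ (2 * α) * Real.exp (-u ^ 2 / (4 * s))) D := by
  intro u hu
  exact ((Real.continuousAt_rpow_const u (2 * α) (Or.inl (ne_of_gt (hD hu)))).mul
    (((continuous_pow 2).neg.div_const (4 * s)).rexp.continuousAt)).continuousWithinAt

lemma f_monoOn (hα : 0 < α) (hs : 0 < s) :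
    MonotoneOn (fun u : ℝ => u ^ (2 * α) * Real.exp (-u ^ 2 / (4 * s)))
      (Set.Ioc 0 (Real.sqrt (4 * α * s))) := by
  set m := Real.sqrt (4 * α * s) with hm
  have hm2 : m ^ 2 = 4 * α * s := Real.sq_sqrt (by positivity)
  apply StrictMonoOn.monotoneOn
  apply strictMonoOn_of_deriv_pos (convex_Ioc 0 m) (f_contOn hs Set.Ioc_subset_Ioi_self)
  intro u hu
  rw [interior_Ioc] at hu
  obtain ⟨hu0, hum⟩ := hu
  rw [(f_hasDeriv hα hs hu0).deriv]
  have h1 : u ^ 2 < 4 * α * s := by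
    rw [← hm2]; exact pow_lt_pow_left₀ hum hu0.le (by norm_num)
  have h2 : 0 < 2 * α - u ^ 2 / (2 * s) := by
    rw [sub_pos, div_lt_iff₀ (by positivity)]; nlinarith
  positivity

lemma f_antiOn (hα : 0 < α) (hs : 0 < s) :
    AntitoneOn (fun u : ℝ => u ^ (2 * α) * Real.exp (-u ^ 2 / (4 * s)))
      (Set.Ici (Real.sqrt (4 * α * s))) := by
  set m := Real.sqrt (4 * α * s) with hm
  have hm0 : 0 < m := Real.sqrt_pos.2 (by positivity)
  have hm2 : m ^ 2 = 4 * α * s := Real.sq_sqrt (by positivity)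
  apply StrictAntiOn.antitoneOn
  apply strictAntiOn_of_deriv_neg (convex_Ici m)
    (f_contOn hs (fun x hx => lt_of_lt_of_le hm0 hx))
  intro u hu
  rw [interior_Ici] at hu
  have hu0 : 0 < u := hm0.trans hu
  rw [(f_hasDeriv hα hs hu0).deriv]
  have h1 : 4 * α * s < u ^ 2 := by
    rw [← hm2]; exact pow_lt_pow_left₀ hu hm0.le (by norm_num)
  have h2 : 2 * α - u ^ 2 / (2 * s) < 0 := by
    rw [sub_neg, lt_div_iff₀ (by positivity)]; nlinarith
  have h3 : 0 < u ^ (2 * α - 1) * Real.exp (-u ^ 2 / (4 * s)) := by positivity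
  exact mul_neg_of_pos_of_neg h3 h2
end calc2

section core
variable {α s : ℝ}

lemma tv_core (hα : 0 < α) (hα1 : α < 1) (hs : 0 < s) (a : ℤ → ℝ)
    (ha : ∀ j, 0 < a j) (hmono : Monotone a) :
    Summable (fun j : ℤ => |a (j + 1) ^ (2 * α) * Real.exp (-(a (j + 1)) ^ 2 / (4 * s))
        - a j ^ (2 * α) * Real.exp (-(a j) ^ 2 / (4 * s))|) ∧
      (∑' j : ℤ, |a (j + 1) ^ (2 * α) * Real.exp (-(a (j + 1)) ^ 2 / (4 * s))
        - a j ^ (2 * α) * Real.exp (-(a j) ^ 2 / (4 * s))|) ≤ 8 * s ^ α := by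
  set f : ℝ → ℝ := fun u => u ^ (2 * α) * Real.exp (-u ^ 2 / (4 * s)) with hf
  set m := Real.sqrt (4 * α * s) with hm
  have hm0 : 0 < m := Real.sqrt_pos.2 (by positivity)
  have hm2 : m ^ 2 = 4 * α * s := Real.sq_sqrt (by positivity)
  have hfnn : ∀ v : ℝ, 0 ≤ v → 0 ≤ f v := fun v hv =>
    mul_nonneg (Real.rpow_nonneg hv _) (Real.exp_nonneg _)
  set M := f m with hM
  set gg : ℤ → ℝ := fun j => f (min (a j) m) with hgg
  set hh : ℤ → ℝ := fun j => M - f (max (a j) m) with hhh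
  have hmemg : ∀ j, min (a j) m ∈ Set.Ioc 0 m := fun j =>
    ⟨lt_min (ha j) hm0, min_le_right _ _⟩
  have hmemm : m ∈ Set.Ioc 0 m := ⟨hm0, le_rfl⟩
  have hggmono : Monotone gg := fun j k hjk =>
    f_monoOn hα hs (hmemg j) (hmemg k) (min_le_min (hmono hjk) le_rfl)
  have hhhmono : Monotone hh := fun j k hjk => by
    have h' : f (max (a k) m) ≤ f (max (a j) m) :=
      f_antiOn hα hs (le_max_right (a j) m) (le_max_right (a k) m)
        (max_le_max (hmono hjk) le_rfl)
    simp only [hhh]; linarith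
  have hgg0 : ∀ j, 0 ≤ gg j := fun j => hfnn _ (hmemg j).1.le
  have hggM : ∀ j, gg j ≤ M := fun j =>
    f_monoOn hα hs (hmemg j) hmemm (min_le_right _ _)
  have hhh0 : ∀ j, 0 ≤ hh j := fun j => by
    have h' : f (max (a j) m) ≤ f m :=
      f_antiOn hα hs (le_refl m : m ∈ Set.Ici m) (le_max_right (a j) m)
        (le_max_right (a j) m)
    simp only [hhh, hM]; linarith
  have hhhM : ∀ j, hh j ≤ M := fun j => by
    have := hfnn (max (a j) m) (le_trans hm0.le (le_max_right _ _))
    simp only [hhh]; linarith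
  have hfgh : ∀ j, f (a j) = gg j - hh j := fun j => by
    rcases le_total (a j) m with h | h
    · simp [hgg, hhh, hM, min_eq_left h, max_eq_right h]
    · simp [hgg, hhh, hM, min_eq_right h, max_eq_left h]
  have hptwise : ∀ j : ℤ, |f (a (j + 1)) - f (a j)|
      ≤ (gg (j + 1) - gg j) + (hh (j + 1) - hh j) := fun j => by
    rw [hfgh, hfgh]
    have h1 : 0 ≤ gg (j + 1) - gg j := by
      have := hggmono (by omega : j ≤ j + 1); linarith
    have h2 : 0 ≤ hh (j + 1) - hh j := by
      have := hhhmono (by omega : j ≤ j + 1); linarith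
    calc |gg (j + 1) - hh (j + 1) - (gg j - hh j)|
        = |(gg (j + 1) - gg j) - (hh (j + 1) - hh j)| := by ring_nf
      _ ≤ |gg (j + 1) - gg j| + |hh (j + 1) - hh j| := abs_sub _ _
      _ = (gg (j + 1) - gg j) + (hh (j + 1) - hh j) := by
          rw [abs_of_nonneg h1, abs_of_nonneg h2]
  obtain ⟨hgsum, hgle⟩ := mono_inc_summable gg hggmono M hgg0 hggM
  obtain ⟨hhsum, hhle⟩ := mono_inc_summable hh hhhmono M hhh0 hhhM
  have hDsum : Summable (fun j : ℤ => (gg (j + 1) - gg j) + (hh (j + 1) - hh j)) :=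
    hgsum.add hhsum
  have hFsum : Summable (fun j : ℤ => |f (a (j + 1)) - f (a j)|) :=
    Summable.of_nonneg_of_le (fun j => abs_nonneg _) hptwise hDsum
  have hMle : M ≤ 4 * s ^ α := by
    have h1 : m ^ (2 * α) = (4 * α * s) ^ α := by
      have e1 : m ^ (2:ℝ) = m ^ 2 := by
        rw [← Real.rpow_natCast m 2]; norm_num
      rw [Real.rpow_mul hm0.le, e1, hm2]
    have h2 : Real.exp (-m ^ 2 / (4 * s)) ≤ 1 := by
      rw [Real.exp_le_one_iff, neg_div]
      have : (0:ℝ) ≤ m ^ 2 / (4 * s) := by positivity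
      linarith
    have h3 : (4 * α * s) ^ α ≤ (4 * s) ^ α := by
      apply Real.rpow_le_rpow (by positivity) (by nlinarith) hα.le
    have h4 : (4 * s) ^ α = 4 ^ α * s ^ α := Real.mul_rpow (by norm_num) hs.le
    have h5 : (4 : ℝ) ^ α ≤ 4 := by
      calc (4 : ℝ) ^ α ≤ 4 ^ (1 : ℝ) :=
        Real.rpow_le_rpow_of_exponent_le (by norm_num) hα1.le
      _ = 4 := Real.rpow_one 4
    calc M = m ^ (2 * α) * Real.exp (-m ^ 2 / (4 * s)) := rfl
      _ ≤ (4 * α * s) ^ α * 1 := by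
          rw [h1]; exact mul_le_mul_of_nonneg_left h2 (by positivity)
      _ = (4 * α * s) ^ α := mul_one _
      _ ≤ 4 ^ α * s ^ α := by rw [← h4]; exact h3
      _ ≤ 4 * s ^ α := mul_le_mul_of_nonneg_right h5 (by positivity)
  refine ⟨hFsum, ?_⟩
  calc (∑' j : ℤ, |f (a (j + 1)) - f (a j)|)
      ≤ ∑' j : ℤ, ((gg (j + 1) - gg j) + (hh (j + 1) - hh j)) :=
        Summable.tsum_le_tsum hptwise hFsum hDsum
    _ = (∑' j : ℤ, (gg (j + 1) - gg j)) + ∑' j : ℤ, (hh (j + 1) - hh j) :=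
        Summable.tsum_add hgsum hhsum
    _ ≤ M + M := add_le_add hgle hhle
    _ ≤ 8 * s ^ α := by linarith
end core

lemma gauss_bound (n : ℕ) (s r : ℝ) (hs : 0 < s) (hr : 0 ≤ r) :
    Real.exp (-r ^ 2 / (4 * s)) * (Real.sqrt s + r) ^ (n + 2)
      ≤ ((Nat.factorial (n + 2)) * 8 ^ (n + 2) : ℝ) * (Real.sqrt s) ^ (n + 2) := by
  set q := Real.sqrt s with hq
  have hq0 : 0 < q := Real.sqrt_pos.2 hs
  have hq2 : q ^ 2 = s := Real.sq_sqrt hs.le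
  have hfac : (1 : ℝ) ≤ (Nat.factorial (n + 2)) := by exact_mod_cast Nat.one_le_iff_ne_zero.2 (Nat.factorial_ne_zero _)
  rcases le_total r q with h | h
  · have he : Real.exp (-r ^ 2 / (4 * s)) ≤ 1 := by
      rw [Real.exp_le_one_iff, neg_div]
      have : (0:ℝ) ≤ r ^ 2 / (4 * s) := by positivity
      linarith
    calc Real.exp (-r ^ 2 / (4 * s)) * (q + r) ^ (n + 2)
        ≤ 1 * (2 * q) ^ (n + 2) := by
          apply mul_le_mul he (pow_le_pow_left₀ (by positivity) (by linarith) _)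
            (by positivity) (by norm_num)
      _ = 2 ^ (n + 2) * q ^ (n + 2) := by rw [one_mul, mul_pow]
      _ ≤ ((Nat.factorial (n + 2)) * 8 ^ (n + 2) : ℝ) * q ^ (n + 2) := by
          apply mul_le_mul_of_nonneg_right _ (by positivity)
          calc (2:ℝ) ^ (n+2) ≤ 8 ^ (n+2) := pow_le_pow_left₀ (by norm_num) (by norm_num) _
            _ ≤ (Nat.factorial (n + 2)) * 8 ^ (n + 2) := le_mul_of_one_le_left (by positivity) hfac
  · set x := r ^ 2 / (4 * s) with hx
    have hx0 : 0 < x := by have : 0 < r := hq0.trans_le h; positivity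
    have hexp : x ^ (n + 2) ≤ (Nat.factorial (n + 2)) * Real.exp x := by
      have h1 := Real.pow_div_factorial_le_exp (x := x) hx0.le (n + 2)
      rw [div_le_iff₀ (by positivity)] at h1
      linarith [h1]
    have hcancel : Real.exp (-x) * Real.exp x = 1 := by
      rw [← Real.exp_add]; simp
    have h8 : 2 * r ≤ 8 * q * x := by
      have key : 8 * q * x = 2 * q * r ^ 2 / s := by rw [hx]; field_simp; ring
      rw [key, ← hq2, le_div_iff₀ (by positivity)]
      nlinarith [mul_le_mul_of_nonneg_left (mul_le_mul_of_nonneg_left h hq0.le) (by linarith : (0:ℝ) ≤ 2 * r)]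
    have hneg : -r ^ 2 / (4 * s) = -x := by rw [hx]; ring
    rw [hneg]
    calc Real.exp (-x) * (q + r) ^ (n + 2)
        ≤ Real.exp (-x) * (8 * q * x) ^ (n + 2) := by
          apply mul_le_mul_of_nonneg_left
            (pow_le_pow_left₀ (by positivity) (by linarith) _) (Real.exp_nonneg _)
      _ = Real.exp (-x) * ((8 * q) ^ (n + 2) * x ^ (n + 2)) := by rw [mul_pow (8*q) x]
      _ ≤ Real.exp (-x) * ((8 * q) ^ (n + 2) * ((Nat.factorial (n + 2)) * Real.exp x)) := by
          apply mul_le_mul_of_nonneg_left _ (Real.exp_nonneg _)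
          exact mul_le_mul_of_nonneg_left hexp (by positivity)
      _ = ((Nat.factorial (n + 2)) * 8 ^ (n + 2) : ℝ) * q ^ (n + 2) * (Real.exp (-x) * Real.exp x) := by
          rw [mul_pow 8 q]; ring
      _ = ((Nat.factorial (n + 2)) * 8 ^ (n + 2) : ℝ) * q ^ (n + 2) := by rw [hcancel, mul_one]

end KernelAux

/-- Kernel size estimate: for an increasing positive sequence `a_j` with `a_j → 0` as
`j → -∞` and `a_j → ∞` as `j → ∞`, the total variation sum of the subordinated kernels is
bounded by `C e^{-|y|²/(4s)}/s^{n/2+1}`, which in turn is bounded by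
`C'/(√s + |y|)^{n+2}`. -/
theorem kernel_size_estimate (n : ℕ) (hn : 1 ≤ n) (α : ℝ) (hα : 0 < α) (hα1 : α < 1) :
    ∃ C > 0, ∃ C' > 0, ∀ (a : ℤ → ℝ), (∀ j, 0 < a j) → StrictMono a →
      Tendsto a atBot (nhds 0) → Tendsto a atTop atTop →
      ∀ (s : ℝ), 0 < s → ∀ (y : EuclideanSpace ℝ (Fin n)),
      (∑' j : ℤ,
          |a (j + 1) ^ (2 * α) * Real.exp (-(a (j + 1)) ^ 2 / (4 * s))
            - a j ^ (2 * α) * Real.exp (-(a j) ^ 2 / (4 * s))| *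
          (Real.exp (-‖y‖ ^ 2 / (4 * s)) / ((4 * Real.pi * s) ^ ((n : ℝ) / 2) * s ^ (1 + α))))
        ≤ C * Real.exp (-‖y‖ ^ 2 / (4 * s)) / s ^ ((n : ℝ) / 2 + 1) ∧
      C * Real.exp (-‖y‖ ^ 2 / (4 * s)) / s ^ ((n : ℝ) / 2 + 1)
        ≤ C' / (Real.sqrt s + ‖y‖) ^ ((n : ℝ) + 2) := by
  have hπ : (0:ℝ) < 4 * Real.pi := by positivity
  set A : ℝ := (4 * Real.pi) ^ ((n : ℝ) / 2) with hA
  have hA0 : 0 < A := Real.rpow_pos_of_pos hπ _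
  set C : ℝ := 8 / A with hC
  have hC0 : 0 < C := by positivity
  set c : ℝ := (Nat.factorial (n + 2)) * 8 ^ (n + 2) with hc
  have hc0 : (0:ℝ) < c := by positivity
  refine ⟨C, hC0, C * c, by positivity, ?_⟩
  intro a ha hsm _ _ s hs y
  set E : ℝ := Real.exp (-‖y‖ ^ 2 / (4 * s)) with hE
  have hE0 : 0 < E := Real.exp_pos _
  set K : ℝ := E / ((4 * Real.pi * s) ^ ((n : ℝ) / 2) * s ^ (1 + α)) with hK
  have hK0 : 0 ≤ K := by
    apply div_nonneg hE0.le
    positivity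
  obtain ⟨hsum, hle⟩ := tv_core hα hα1 hs a ha hsm.monotone
  constructor
  · have h1 : (∑' j : ℤ,
        |a (j + 1) ^ (2 * α) * Real.exp (-(a (j + 1)) ^ 2 / (4 * s))
          - a j ^ (2 * α) * Real.exp (-(a j) ^ 2 / (4 * s))| * K)
        = (∑' j : ℤ, |a (j + 1) ^ (2 * α) * Real.exp (-(a (j + 1)) ^ 2 / (4 * s))
          - a j ^ (2 * α) * Real.exp (-(a j) ^ 2 / (4 * s))|) * K := tsum_mul_right
    rw [h1]
    have h2 : (∑' j : ℤ, |a (j + 1) ^ (2 * α) * Real.exp (-(a (j + 1)) ^ 2 / (4 * s))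
          - a j ^ (2 * α) * Real.exp (-(a j) ^ 2 / (4 * s))|) * K ≤ 8 * s ^ α * K :=
      mul_le_mul_of_nonneg_right hle hK0
    refine h2.trans (le_of_eq ?_)
    rw [hK, hE]
    have hmul : (4 * Real.pi * s) ^ ((n : ℝ) / 2) = A * s ^ ((n : ℝ) / 2) := by
      rw [hA, show 4 * Real.pi * s = (4 * Real.pi) * s by ring,
        Real.mul_rpow hπ.le hs.le]
    have hexp2 : s ^ ((n : ℝ) / 2) * s ^ (1 + α) = s ^ ((n : ℝ) / 2 + 1) * s ^ α := by
      rw [← Real.rpow_add hs, ← Real.rpow_add hs]; ring_nf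
    have hP0 : (0:ℝ) < s ^ ((n : ℝ) / 2 + 1) := Real.rpow_pos_of_pos hs _
    have hQ0 : (0:ℝ) < s ^ α := Real.rpow_pos_of_pos hs _
    rw [hmul, mul_assoc A, hexp2, hC]
    field_simp
  · set r : ℝ := ‖y‖ with hr
    have hr0 : 0 ≤ r := norm_nonneg _
    have hb0 : 0 < Real.sqrt s + r := by
      have := Real.sqrt_pos.2 hs; linarith
    have hbP : (Real.sqrt s + r) ^ ((n : ℝ) + 2) = (Real.sqrt s + r) ^ (n + 2) := by
      rw [← Real.rpow_natCast (Real.sqrt s + r) (n + 2)]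
      congr 1; push_cast; ring
    have hsP : s ^ ((n : ℝ) / 2 + 1) = (Real.sqrt s) ^ (n + 2) := by
      rw [Real.sqrt_eq_rpow, ← Real.rpow_natCast (s ^ ((1:ℝ) / 2)) (n + 2),
        ← Real.rpow_mul hs.le]
      congr 1; push_cast; ring
    rw [hbP, hsP, div_le_div_iff₀ (by positivity) (by positivity)]
    have hg := gauss_bound n s r hs hr0
    calc C * E * (Real.sqrt s + r) ^ (n + 2)
        = C * (E * (Real.sqrt s + r) ^ (n + 2)) := by ring
      _ ≤ C * (c * (Real.sqrt s) ^ (n + 2)) := by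
          apply mul_le_mul_of_nonneg_left _ hC0.le
          rw [hE, hc]; exact hg
      _ = C * c * (Real.sqrt s) ^ (n + 2) := by ring
end
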